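/- The sequence N ↦ H(N,1/2) = (1/(N·2^N)) Σ_{k=0}^{N} C(N,k) log₂ C(N,k) is monotonically nondecreasing in N: for every integer N ≥ 1, H(N+1,1/2) ≥ H(N,1/2). -/

import Mathlib

open Finset

/-- `H(N,1/2) = (1/(N·2^N)) ∑_{k=0}^{N} C(N,k) log₂ C(N,k)`. -/
noncomputable def Hhalf (N : ℕ) : ℝ :=
  (1 / ((N : ℝ) * 2 ^ N)) * ∑ k ∈ Finset.range (N + 1),
    (N.choose k : ℝ) * Real.logb 2 (N.choose k)


lemma aux_bern (a n : ℕ) : a^n * (a + n) ≤ (a+1)^n * a := by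
  induction n with
  | zero => simp
  | succ n ih =>
    have h2 : a^(n+1) ≤ (a+1)^n * a := by
      calc a^(n+1) = a^n * a := by ring
        _ ≤ (a+1)^n * a := Nat.mul_le_mul_right _ (Nat.pow_le_pow_left (by omega) n)
    calc a^(n+1) * (a + (n+1)) = a * (a^n * (a+n)) + a^(n+1) := by ring
      _ ≤ a * ((a+1)^n * a) + (a+1)^n * a := Nat.add_le_add (Nat.mul_le_mul_left _ ih) h2
      _ = (a+1)^(n+1) * a := by ring

lemma aux_lemA (n : ℕ) : (2*n).choose n * (n+2)^n ≤ 4^n * (n+1)^n := by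
  induction n with
  | zero => simp
  | succ n ih =>
    set c := (2*n).choose n with hc
    have hcb : (n+1) * (2*(n+1)).choose (n+1) = 2*(2*n+1) * c := by
      have := Nat.succ_mul_centralBinom_succ n
      simpa [Nat.centralBinom, hc] using this
    set a := (n+1)*(n+3) with ha
    have hsq : a + 1 = (n+2)^2 := by rw [ha]; ring
    have key1 : (2*(2*n+1)*(n+3)) * a ≤ (4*(n+1)*(n+2)) * (a+n) := by
      rw [ha]; nlinarith [sq_nonneg n]
    have C : (2*(2*n+1)*(n+3)) * a^n * a ≤ (4*(n+1)*(n+2)) * ((a+1)^n * a) := by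
      calc (2*(2*n+1)*(n+3)) * a^n * a = a^n * ((2*(2*n+1)*(n+3)) * a) := by ring
        _ ≤ a^n * ((4*(n+1)*(n+2)) * (a+n)) := Nat.mul_le_mul_left _ key1
        _ = (4*(n+1)*(n+2)) * (a^n * (a+n)) := by ring
        _ ≤ (4*(n+1)*(n+2)) * ((a+1)^n * a) := Nat.mul_le_mul_left _ (aux_bern a n)
    have C' : (2*(2*n+1)*(n+3)) * a^n ≤ (4*(n+1)*(n+2)) * (a+1)^n := by
      refine Nat.le_of_mul_le_mul_right ?_ (show 0 < a by rw [ha]; positivity)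
      calc (2*(2*n+1)*(n+3)) * a^n * a ≤ (4*(n+1)*(n+2)) * ((a+1)^n * a) := C
        _ = (4*(n+1)*(n+2)) * (a+1)^n * a := by ring
    show (2*(n+1)).choose (n+1) * (n+1+2)^(n+1) ≤ 4^(n+1) * (n+1+1)^(n+1)
    refine Nat.le_of_mul_le_mul_left ?_ (Nat.succ_pos n)
    refine Nat.le_of_mul_le_mul_right ?_ (show 0 < (n+2)^n by positivity)
    calc (n+1) * ((2*(n+1)).choose (n+1) * (n+1+2)^(n+1)) * (n+2)^n
        = ((n+1) * (2*(n+1)).choose (n+1)) * ((n+3)^(n+1) * (n+2)^n) := by ring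
      _ = (2*(2*n+1)*c) * ((n+3)^(n+1) * (n+2)^n) := by rw [hcb]
      _ = (2*(2*n+1)) * (n+3)^(n+1) * (c * (n+2)^n) := by ring
      _ ≤ (2*(2*n+1)) * (n+3)^(n+1) * (4^n * (n+1)^n) := Nat.mul_le_mul_left _ ih
      _ = 4^n * ((2*(2*n+1)*(n+3)) * a^n) := by rw [ha, mul_pow]; ring
      _ ≤ 4^n * ((4*(n+1)*(n+2)) * (a+1)^n) := Nat.mul_le_mul_left _ C'
      _ = 4^n * ((4*(n+1)*(n+2)) * ((n+2)^n*(n+2)^n)) := by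
            rw [hsq, ← pow_add, ← pow_mul, two_mul]
      _ = (n+1) * (4^(n+1) * (n+1+1)^(n+1)) * (n+2)^n := by ring


lemma aux_jensen (n : ℕ) (a x : ℕ → ℝ) (ha : ∀ i ∈ range n, 0 ≤ a i)
    (hx : ∀ i ∈ range n, 0 < x i) (W : ℝ) (hW : 0 < W)
    (hsum : ∑ i ∈ range n, a i = W) :
    ∑ i ∈ range n, a i * Real.log (x i) ≤ W * Real.log ((∑ i ∈ range n, a i * x i) / W) := by
  have hconc : ConcaveOn ℝ (Set.Ioi 0) Real.log := strictConcaveOn_log_Ioi.concaveOn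
  have h := hconc.le_map_sum (t := range n) (w := fun i => a i / W) (p := x)
    (fun i hi => div_nonneg (ha i hi) hW.le)
    (by rw [← Finset.sum_div, hsum, div_self hW.ne'])
    (fun i hi => hx i hi)
  simp only [smul_eq_mul] at h
  have e1 : ∑ i ∈ range n, a i / W * x i = (∑ i ∈ range n, a i * x i) / W := by
    rw [Finset.sum_div]; exact Finset.sum_congr rfl (fun i _ => by ring)
  rw [e1] at h
  calc ∑ i ∈ range n, a i * Real.log (x i)
      = W * ∑ i ∈ range n, a i / W * Real.log (x i) := by
        rw [Finset.mul_sum]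
        exact Finset.sum_congr rfl (fun i _ => by field_simp)
    _ ≤ W * Real.log ((∑ i ∈ range n, a i * x i) / W) :=
        mul_le_mul_of_nonneg_left h hW.le


lemma aux_sum_choose (N : ℕ) : ∑ k ∈ range (N+1), (N.choose k : ℝ) = 2^N := by
  exact_mod_cast congrArg (Nat.cast : ℕ → ℝ) (Nat.sum_range_choose N)

lemma aux_sum_reflect (N : ℕ) (f : ℕ → ℝ) :
    ∑ k ∈ range (N+1), (N.choose k : ℝ) * f (N - k)
      = ∑ k ∈ range (N+1), (N.choose k : ℝ) * f k := by
  rw [← Finset.sum_range_reflect (fun k => (N.choose k : ℝ) * f k) (N+1)]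
  refine Finset.sum_congr rfl fun k hk => ?_
  have hk' : k ≤ N := by simpa [Nat.lt_succ_iff] using hk
  rw [show N+1-1-k = N-k from by omega, Nat.choose_symm hk']

lemma aux_sum_mul (N : ℕ) :
    ∑ k ∈ range (N+1), (N.choose k : ℝ) * ((k:ℝ)+1) = 2^N * ((N:ℝ)+2) / 2 := by
  have hr := aux_sum_reflect N (fun j => (j:ℝ)+1)
  have hs := aux_sum_choose N
  have h2 : (∑ k ∈ range (N+1), (N.choose k:ℝ)*((k:ℝ)+1))
      + (∑ k ∈ range (N+1), (N.choose k:ℝ)*((k:ℝ)+1)) = 2^N * ((N:ℝ)+2) := by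
    nth_rewrite 1 [← hr]
    rw [← Finset.sum_add_distrib, show (2:ℝ)^N * ((N:ℝ)+2)
        = ∑ k ∈ range (N+1), (N.choose k:ℝ) * ((N:ℝ)+2) from by
      rw [← Finset.sum_mul, hs]]
    refine Finset.sum_congr rfl fun k hk => ?_
    have hk' : k ≤ N := by simpa [Nat.lt_succ_iff] using hk
    have : ((N-k:ℕ):ℝ) = (N:ℝ) - k := by
      push_cast [Nat.cast_sub hk']; ring
    rw [this]; ring
  linarith

lemma aux_sum_sq (N : ℕ) :
    ∑ k ∈ range (N+1), (N.choose k : ℝ) * (N.choose k : ℝ) = ((2*N).choose N : ℝ) := by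
  have h : ∑ k ∈ range (N+1), N.choose k * N.choose k = (2*N).choose N := by
    have hv := Nat.add_choose_eq N N N
    rw [Finset.Nat.sum_antidiagonal_eq_sum_range_succ (fun i j => N.choose i * N.choose j) N] at hv
    rw [show 2*N = N+N from by ring, hv]
    refine Finset.sum_congr rfl fun k hk => ?_
    have hk' : k ≤ N := by simpa [Nat.lt_succ_iff] using hk
    rw [Nat.choose_symm hk']
  exact_mod_cast congrArg (Nat.cast : ℕ → ℝ) h

lemma aux_log_id (N k : ℕ) (hk : k ≤ N) :
    Real.log ((N+1).choose k : ℝ) + Real.log ((N+1).choose (k+1) : ℝ)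
    = 2 * Real.log (N.choose k : ℝ) + 2 * Real.log ((N:ℝ)+1)
      - Real.log ((k:ℝ)+1) - Real.log (((N-k:ℕ):ℝ)+1) := by
  have h1 : (N+1) * N.choose k = (N+1).choose (k+1) * (k+1) := Nat.add_one_mul_choose_eq N k
  have h2 : (N+1) * N.choose k = (N+1).choose k * ((N-k)+1) := by
    have h1' : (N+1) * N.choose (N-k) = (N+1).choose ((N-k)+1) * ((N-k)+1) :=
      Nat.add_one_mul_choose_eq N (N-k)
    rw [Nat.choose_symm hk] at h1'
    rw [show (N-k)+1 = (N+1)-k from by omega] at h1' ⊢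
    rw [Nat.choose_symm (by omega : k ≤ N+1)] at h1'
    exact h1'
  have hA : (0:ℝ) < (N.choose k : ℝ) := by exact_mod_cast Nat.choose_pos hk
  have hB : (0:ℝ) < ((N+1).choose k : ℝ) := by
    exact_mod_cast Nat.choose_pos (by omega : k ≤ N+1)
  have hB' : (0:ℝ) < ((N+1).choose (k+1) : ℝ) := by
    exact_mod_cast Nat.choose_pos (by omega : k+1 ≤ N+1)
  have hx : (0:ℝ) < (k:ℝ)+1 := by positivity
  have hy : (0:ℝ) < ((N-k:ℕ):ℝ)+1 := by positivity
  have hNp : (0:ℝ) < (N:ℝ)+1 := by positivity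
  have e1 : ((N:ℝ)+1) * (N.choose k : ℝ) = ((N+1).choose (k+1) : ℝ) * ((k:ℝ)+1) := by
    exact_mod_cast congrArg (Nat.cast : ℕ → ℝ) h1
  have e2 : ((N:ℝ)+1) * (N.choose k : ℝ) = ((N+1).choose k : ℝ) * (((N-k:ℕ):ℝ)+1) := by
    exact_mod_cast congrArg (Nat.cast : ℕ → ℝ) h2
  have emul : ((N+1).choose k : ℝ) * ((N+1).choose (k+1) : ℝ) * (((k:ℝ)+1) * (((N-k:ℕ):ℝ)+1))
      = (N.choose k : ℝ) * (N.choose k : ℝ) * (((N:ℝ)+1) * ((N:ℝ)+1)) := by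
    calc ((N+1).choose k : ℝ) * ((N+1).choose (k+1) : ℝ) * (((k:ℝ)+1) * (((N-k:ℕ):ℝ)+1))
        = (((N+1).choose k : ℝ) * (((N-k:ℕ):ℝ)+1)) * (((N+1).choose (k+1) : ℝ) * ((k:ℝ)+1)) := by
          ring
      _ = (((N:ℝ)+1) * (N.choose k : ℝ)) * (((N:ℝ)+1) * (N.choose k : ℝ)) := by
          rw [← e2, ← e1]
      _ = (N.choose k : ℝ) * (N.choose k : ℝ) * (((N:ℝ)+1) * ((N:ℝ)+1)) := by ring
  have elog := congrArg Real.log emul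
  rw [Real.log_mul (by positivity) (by positivity),
      Real.log_mul hB.ne' hB'.ne', Real.log_mul hx.ne' hy.ne',
      Real.log_mul (by positivity) (by positivity),
      Real.log_mul hA.ne' hA.ne', Real.log_mul hNp.ne' hNp.ne'] at elog
  linarith

/-- The sequence `N ↦ H(N,1/2)` is monotonically nondecreasing:
for every integer `N ≥ 1`, `H(N+1,1/2) ≥ H(N,1/2)`. -/
theorem Hhalf_mono (N : ℕ) (hN : 1 ≤ N) : Hhalf N ≤ Hhalf (N + 1) := by
  have hlog2 : (0:ℝ) < Real.log 2 := Real.log_pos one_lt_two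
  have hN0 : (0:ℝ) < N := by exact_mod_cast hN
  have hP : (0:ℝ) < 2^N := by positivity
  set S : ℝ := ∑ k ∈ range (N+1), (N.choose k : ℝ) * Real.log (N.choose k : ℝ) with hSdef
  set S' : ℝ := ∑ k ∈ range (N+2), ((N+1).choose k : ℝ) * Real.log ((N+1).choose k : ℝ)
    with hS'def
  set U : ℝ := ∑ k ∈ range (N+1), (N.choose k : ℝ) * Real.log ((k:ℝ)+1) with hUdef
  set L1 : ℝ := Real.log ((N:ℝ)+1) with hL1def
  have hApos : ∀ k ∈ range (N+1), (0:ℝ) < (N.choose k : ℝ) := fun k hk => by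
    have : k ≤ N := by simpa [Nat.lt_succ_iff] using hk
    exact_mod_cast Nat.choose_pos this
  have hsumA : ∑ k ∈ range (N+1), (N.choose k : ℝ) = 2^N := aux_sum_choose N
  -- Step 1 : S' = ∑ A k * (log B k + log B (k+1))
  have hstep1 : S' = ∑ k ∈ range (N+1),
      (N.choose k : ℝ) * (Real.log ((N+1).choose k : ℝ) + Real.log ((N+1).choose (k+1) : ℝ)) := by
    rw [hS'def, Finset.sum_range_succ' (fun k => ((N+1).choose k : ℝ) * Real.log ((N+1).choose k : ℝ)) (N+1)]
    simp only [Nat.choose_zero_right, Nat.cast_one, Real.log_one, mul_zero, one_mul, add_zero]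
    have hp : ∀ k, (((N+1).choose (k+1) : ℕ) : ℝ) = (N.choose k : ℝ) + (N.choose (k+1) : ℝ) := by
      intro k; rw [Nat.choose_succ_succ]; push_cast; ring
    calc ∑ k ∈ range (N+1), ((N+1).choose (k+1) : ℝ) * Real.log ((N+1).choose (k+1) : ℝ)
        = ∑ k ∈ range (N+1), ((N.choose k : ℝ) * Real.log ((N+1).choose (k+1) : ℝ)
            + (N.choose (k+1) : ℝ) * Real.log ((N+1).choose (k+1) : ℝ)) := by
          refine Finset.sum_congr rfl fun k _ => ?_
          rw [hp k]; ring
      _ = (∑ k ∈ range (N+1), (N.choose k : ℝ) * Real.log ((N+1).choose (k+1) : ℝ))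
          + ∑ k ∈ range (N+1), (N.choose (k+1) : ℝ) * Real.log ((N+1).choose (k+1) : ℝ) := by
          rw [Finset.sum_add_distrib]
      _ = (∑ k ∈ range (N+1), (N.choose k : ℝ) * Real.log ((N+1).choose (k+1) : ℝ))
          + ∑ k ∈ range (N+1), (N.choose k : ℝ) * Real.log ((N+1).choose k : ℝ) := by
          congr 1
          have := Finset.sum_range_succ' (fun k => (N.choose k : ℝ) * Real.log ((N+1).choose k : ℝ)) (N+1)
          simp only [Nat.choose_zero_right, Nat.cast_one, Real.log_one, mul_zero, one_mul, add_zero] at this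
          rw [← this, Finset.sum_range_succ]
          simp [Nat.choose_succ_self]
      _ = ∑ k ∈ range (N+1), (N.choose k : ℝ) *
            (Real.log ((N+1).choose k : ℝ) + Real.log ((N+1).choose (k+1) : ℝ)) := by
          rw [← Finset.sum_add_distrib]
          refine Finset.sum_congr rfl fun k _ => by ring
  -- Step 2 : S' = 2S + 2·2^N·L1 - 2U
  have hstep2 : S' = 2*S + 2*2^N*L1 - 2*U := by
    rw [hstep1]
    have : ∑ k ∈ range (N+1), (N.choose k : ℝ) *
        (Real.log ((N+1).choose k : ℝ) + Real.log ((N+1).choose (k+1) : ℝ))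
        = ∑ k ∈ range (N+1), (2 * ((N.choose k : ℝ) * Real.log (N.choose k : ℝ))
            + 2 * L1 * (N.choose k : ℝ)
            - (N.choose k : ℝ) * Real.log ((k:ℝ)+1)
            - (N.choose k : ℝ) * Real.log (((N-k:ℕ):ℝ)+1)) := by
      refine Finset.sum_congr rfl fun k hk => ?_
      have hk' : k ≤ N := by simpa [Nat.lt_succ_iff] using hk
      rw [aux_log_id N k hk', hL1def]; ring
    rw [this, Finset.sum_sub_distrib, Finset.sum_sub_distrib, Finset.sum_add_distrib,
        ← Finset.mul_sum, ← Finset.mul_sum, hsumA,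
        aux_sum_reflect N (fun j => Real.log ((j:ℝ)+1)), ← hSdef, ← hUdef]
    ring
  -- Jensen 1 : U ≤ 2^N log((N+2)/2)
  have hU : U ≤ 2^N * Real.log (((N:ℝ)+2)/2) := by
    have h := aux_jensen (N+1) (fun k => (N.choose k : ℝ)) (fun k => (k:ℝ)+1)
      (fun i hi => (hApos i hi).le) (fun i _ => by positivity) (2^N) hP hsumA
    rw [aux_sum_mul N, show (2:ℝ)^N * ((N:ℝ)+2) / 2 / 2^N = ((N:ℝ)+2)/2 from by
      field_simp] at h
    exact h
  -- Jensen 2 : S ≤ 2^N log(C(2N,N)/2^N)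
  have hS : S ≤ 2^N * Real.log (((2*N).choose N : ℝ) / 2^N) := by
    have h := aux_jensen (N+1) (fun k => (N.choose k : ℝ)) (fun k => (N.choose k : ℝ))
      (fun i hi => (hApos i hi).le) hApos (2^N) hP hsumA
    rw [aux_sum_sq N] at h
    exact h
  -- Lemma A consequence
  have hA2 : Real.log (((2*N).choose N : ℝ)/2^N) ≤ (N:ℝ) * (L1 - Real.log (((N:ℝ)+2)/2)) := by
    have hCpos : (0:ℝ) < ((2*N).choose N : ℝ) := by
      exact_mod_cast Nat.choose_pos (by omega : N ≤ 2*N)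
    have h0 : ((2*N).choose N : ℝ)/2^N ≤ (2*((N:ℝ)+1)/((N:ℝ)+2))^N := by
      rw [div_pow, div_le_div_iff₀ (by positivity) (by positivity)]
      calc ((2*N).choose N : ℝ) * ((N:ℝ)+2)^N ≤ 4^N * ((N:ℝ)+1)^N := by
            have := aux_lemA N
            have h' : (((2*N).choose N * (N+2)^N : ℕ) : ℝ) ≤ ((4^N * (N+1)^N : ℕ) : ℝ) := by
              exact_mod_cast this
            push_cast at h'
            convert h' using 2 <;> push_cast <;> ring
        _ = (2*((N:ℝ)+1))^N * 2^N := by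
            rw [mul_pow, show (4:ℝ) = 2*2 from by norm_num, mul_pow]; ring
    have hlog := Real.log_le_log (by positivity) h0
    rw [Real.log_pow] at hlog
    have hsplit : Real.log (2*((N:ℝ)+1)/((N:ℝ)+2)) = L1 - Real.log (((N:ℝ)+2)/2) := by
      rw [Real.log_div (by positivity) (by positivity),
          Real.log_mul (by norm_num) (by positivity),
          Real.log_div (by positivity) (by norm_num), hL1def]
      ring
    rw [hsplit] at hlog
    exact hlog
  -- key : S ≤ N (2^N L1 - U)
  have key : S ≤ (N:ℝ) * (2^N * L1 - U) := by
    have t1 := mul_le_mul_of_nonneg_left hU (le_of_lt hN0)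
    have t2 := mul_le_mul_of_nonneg_left hA2 (le_of_lt hP)
    nlinarith [hS, t1, t2]
  -- final arithmetic
  have hfin : S * (((N:ℝ)+1) * 2^(N+1)) ≤ S' * ((N:ℝ) * 2^N) := by
    have k2 : 2*2^N*S ≤ 2*2^N*((N:ℝ)*(2^N*L1 - U)) :=
      mul_le_mul_of_nonneg_left key (by positivity)
    rw [hstep2, pow_succ]
    nlinarith [k2]
  -- convert logb to log
  have e1 : ∑ k ∈ range (N+1), (N.choose k : ℝ) * Real.logb 2 (N.choose k : ℝ)
      = S / Real.log 2 := by
    rw [hSdef, Finset.sum_div]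
    exact Finset.sum_congr rfl fun k _ => by rw [Real.logb, mul_div_assoc]
  have e2 : ∑ k ∈ range (N+1+1), ((N+1).choose k : ℝ) * Real.logb 2 ((N+1).choose k : ℝ)
      = S' / Real.log 2 := by
    have hdf : S' = ∑ k ∈ range (N+1+1), ((N+1).choose k : ℝ) * Real.log ((N+1).choose k : ℝ) :=
      hS'def
    rw [hdf, Finset.sum_div]
    exact Finset.sum_congr rfl fun k _ => by rw [Real.logb, mul_div_assoc]
  rw [Hhalf, Hhalf]
  rw [e1, e2]
  have hc1 : (0:ℝ) < (N:ℝ)*2^N*Real.log 2 := by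
    exact mul_pos (mul_pos hN0 hP) hlog2
  have hc2 : (0:ℝ) < ((N+1:ℕ):ℝ)*2^(N+1)*Real.log 2 := by positivity
  rw [show (1/((N:ℝ)*2^N)) * (S/Real.log 2) = S / (((N:ℝ)*2^N) * Real.log 2) from by ring,
      show (1/(((N+1:ℕ):ℝ)*2^(N+1))) * (S'/Real.log 2)
        = S' / ((((N+1:ℕ):ℝ)*2^(N+1)) * Real.log 2) from by ring]
  rw [div_le_div_iff₀ hc1 hc2]
  have hcast : ((N+1:ℕ):ℝ) = (N:ℝ)+1 := by push_cast; ring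
  rw [hcast]
  nlinarith [mul_le_mul_of_nonneg_right hfin hlog2.le]
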